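/- (Invertibility of the system matrix in eq. (19).) Suppose K and L are symmetric positive semidefinite real N×N matrices, γ_k > 0, γ_M ≥ 0, and l ≥ 1. Then the matrix J K + l·γ_k·I_N + l·γ_M·L K is invertible, so the interpolation weights a* = (J K + l·γ_k·I_N + l·γ_M·L K)^{-1} q are well defined. -/

import Mathlib

open Matrix

/-- Invertibility of the system matrix in eq. (19): for `K`, `L` symmetric
positive semidefinite, `γₖ > 0`, `γ_M ≥ 0` and `l ≥ 1`, the matrix
`JK + lγₖ I + lγ_M LK` is invertible. -/
theorem stmt_9 (N l : ℕ) (hl : 1 ≤ l) (hlN : l ≤ N)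
    (K L : Matrix (Fin N) (Fin N) ℝ) (hK : K.PosSemidef) (hL : L.PosSemidef)
    (γk γM : ℝ) (hγk : 0 < γk) (hγM : 0 ≤ γM)
    (Jm : Matrix (Fin N) (Fin N) ℝ)
    (hJm : Jm = Matrix.diagonal (fun i : Fin N => if (i : ℕ) < l then (1 : ℝ) else 0)) :
    IsUnit (Jm * K + ((l : ℝ) * γk) • (1 : Matrix (Fin N) (Fin N) ℝ)
        + ((l : ℝ) * γM) • (L * K)) := by
  set c : ℝ := (l : ℝ) * γk with hc
  set d : ℝ := (l : ℝ) * γM with hd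
  have hl1 : (1 : ℝ) ≤ (l : ℝ) := by exact_mod_cast hl
  have hcpos : 0 < c := by rw [hc]; positivity
  have hdnn : 0 ≤ d := by rw [hd]; positivity
  set A : Matrix (Fin N) (Fin N) ℝ := Jm + d • L with hA
  have hJpsd : Jm.PosSemidef := by
    rw [hJm]
    exact Matrix.posSemidef_diagonal_iff.mpr fun i => by positivity
  have hLs : (d • L).PosSemidef := by
    refine Matrix.PosSemidef.of_dotProduct_mulVec_nonneg ?_ ?_
    · show (d • L)ᴴ = d • L; rw [Matrix.conjTranspose_smul, show Lᴴ = L from hL.1, star_trivial]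
    · intro x
      simp only [Matrix.smul_mulVec, dotProduct_smul, smul_eq_mul]
      exact mul_nonneg hdnn (hL.dotProduct_mulVec_nonneg x)
  have hApsd : A.PosSemidef := hJpsd.add hLs
  have hM : Jm * K + c • (1 : Matrix (Fin N) (Fin N) ℝ) + d • (L * K)
      = A * K + c • 1 := by
    rw [hA, add_mul, Matrix.smul_mul]
    abel
  rw [hM, Matrix.isUnit_iff_isUnit_det, isUnit_iff_ne_zero]
  intro hdet
  obtain ⟨v, hv, hv0⟩ := Matrix.exists_mulVec_eq_zero_iff.mpr hdet
  set w : Fin N → ℝ := K *ᵥ v with hw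
  have hAw : A *ᵥ w = -(c • v) := by
    rw [Matrix.add_mulVec, Matrix.smul_mulVec, Matrix.one_mulVec,
      ← Matrix.mulVec_mulVec] at hv0
    exact eq_neg_of_add_eq_zero_left hv0
  have hKv0 : 0 ≤ star v ⬝ᵥ K *ᵥ v := hK.dotProduct_mulVec_nonneg v
  have h1 : star w ⬝ᵥ A *ᵥ w = -(c * (v ⬝ᵥ w)) := by
    rw [hAw]
    simp only [dotProduct_neg, dotProduct_smul, smul_eq_mul, star_trivial]
    rw [dotProduct_comm]
  have h2 : 0 ≤ star w ⬝ᵥ A *ᵥ w := hApsd.dotProduct_mulVec_nonneg w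
  have hvw : v ⬝ᵥ w = star v ⬝ᵥ K *ᵥ v := by simp [hw, star_trivial]
  have hzero : star v ⬝ᵥ K *ᵥ v = 0 := by
    rw [h1, hvw] at h2
    nlinarith [hK.dotProduct_mulVec_nonneg v]
  have hKv : K *ᵥ v = 0 := (hK.dotProduct_mulVec_zero_iff v).mp hzero
  have : c • v = 0 := by
    have := hAw
    rw [← hw] at hKv
    rw [hKv, Matrix.mulVec_zero] at this
    simpa using this.symm
  exact hv (by simpa [smul_eq_zero, hcpos.ne'] using this)
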